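/- Let T be a trivalent finite tree with n ≥ 3 leaves (every internal vertex has degree 3), and let ℓ and ℓ' be two weight functions from the edges of T to the nonnegative reals. If d_{ij}(T, ℓ) = d_{ij}(T, ℓ') for every pair of distinct leaves i, j of T, then ℓ = ℓ'; that is, for a fixed trivalent tree the 2-dissimilarity vector determines the edge weights. -/

import Mathlib

/-- The edge set of the unique path between two vertices of a tree. -/
noncomputable def treePathEdges {V : Type*} [DecidableEq V] (G : SimpleGraph V)
    (hG : G.IsTree) (i j : V) : Finset (Sym2 V) :=
  ((hG.existsUnique_path i j).choose).edges.toFinset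

/-- The tree distance between two vertices: the total weight of the unique path. -/
noncomputable def treeDist {V : Type*} [DecidableEq V] (G : SimpleGraph V)
    (hG : G.IsTree) (ℓ : Sym2 V → ℝ) (i j : V) : ℝ :=
  ∑ e ∈ treePathEdges G hG i j, ℓ e

/-- The combinatorial convex hull of a finite set of vertices of a tree: the union of
the edge sets of the paths between all pairs of members. -/
noncomputable def hullEdges {V : Type*} [DecidableEq V] (G : SimpleGraph V)
    (hG : G.IsTree) (A : Finset V) : Finset (Sym2 V) :=
  A.biUnion fun i => A.biUnion fun j => treePathEdges G hG i j

/-- The dissimilarity of a finite set of vertices of a weighted tree: the total weight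
of its combinatorial convex hull. -/
noncomputable def dissim {V : Type*} [DecidableEq V] (G : SimpleGraph V)
    (hG : G.IsTree) (ℓ : Sym2 V → ℝ) (A : Finset V) : ℝ :=
  ∑ e ∈ hullEdges G hG A, ℓ e

/-- A vertex of a graph is a leaf if it has exactly one neighbor. -/
def IsLeaf {V : Type*} (G : SimpleGraph V) (v : V) : Prop :=
  (G.neighborSet v).ncard = 1

section Aux

open SimpleGraph Walk

set_option linter.unusedSectionVars false

variable {V : Type*} [DecidableEq V] {G : SimpleGraph V} (hG : G.IsTree)

/-- The unique path between two vertices of a tree. -/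
noncomputable def pb (i j : V) : G.Walk i j := (hG.existsUnique_path i j).choose

lemma pb_isPath (i j : V) : (pb hG i j).IsPath := (hG.existsUnique_path i j).choose_spec.1

lemma pb_eq {i j : V} (p : G.Walk i j) (hp : p.IsPath) : p = pb hG i j :=
  (hG.existsUnique_path i j).choose_spec.2 p hp

lemma treeDist_eq {i j : V} (f : Sym2 V → ℝ) (p : G.Walk i j) (hp : p.IsPath) :
    treeDist G hG f i j = (p.edges.map f).sum := by
  have h1 : treePathEdges G hG i j = p.edges.toFinset := by
    show (pb hG i j).edges.toFinset = p.edges.toFinset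
    rw [← pb_eq hG p hp]
  rw [treeDist, h1, List.sum_toFinset _ hp.edges_nodup]

lemma treeDist_symm (f : Sym2 V → ℝ) (i j : V) :
    treeDist G hG f i j = treeDist G hG f j i := by
  rw [treeDist_eq hG f ((pb hG j i).reverse) (pb_isPath hG j i).reverse,
    treeDist_eq hG f (pb hG j i) (pb_isPath hG j i), Walk.edges_reverse, List.map_reverse,
    List.sum_reverse]

lemma treeDist_split {i j v : V} (f : Sym2 V → ℝ) (hv : v ∈ (pb hG i j).support) :
    treeDist G hG f i j = treeDist G hG f i v + treeDist G hG f v j := by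
  have hp := pb_isPath hG i j
  rw [treeDist_eq hG f (pb hG i j) hp, ← (pb hG i j).take_spec hv, Walk.edges_append,
    List.map_append, List.sum_append,
    ← treeDist_eq hG f _ (hp.takeUntil hv), ← treeDist_eq hG f _ (hp.dropUntil hv)]

lemma treeDist_single {u v : V} (f : Sym2 V → ℝ) (h : G.Adj u v) :
    treeDist G hG f u v = f s(u, v) := by
  have hp : (Walk.cons h Walk.nil).IsPath := by
    rw [Walk.cons_isPath_iff]
    exact ⟨Walk.IsPath.nil, by simp [h.ne]⟩
  rw [treeDist_eq hG f _ hp]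
  simp

lemma concat_isPath {i u v : V} (h : G.Adj u v) {p : G.Walk i u} (hp : p.IsPath)
    (hv : v ∉ p.support) : (p.concat h).IsPath := by
  rw [Walk.isPath_def, Walk.support_concat, List.nodup_append]
  refine ⟨hp.support_nodup, List.nodup_singleton v, ?_⟩
  intro x hx y hx' hxy
  rw [← hxy] at hx'
  simp only [List.mem_singleton] at hx'
  subst hx'
  exact hv hx

lemma pb_concat {i u v : V} (h : G.Adj u v) (hv : v ∉ (pb hG i u).support) :
    pb hG i v = (pb hG i u).concat h :=
  (pb_eq hG _ (concat_isPath h (pb_isPath hG i u) hv)).symm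

lemma treeDist_concat {i u v : V} (f : Sym2 V → ℝ) (h : G.Adj u v)
    (hv : v ∉ (pb hG i u).support) :
    treeDist G hG f i v = treeDist G hG f i u + f s(u, v) := by
  rw [treeDist_eq hG f _ (concat_isPath h (pb_isPath hG i u) hv), Walk.edges_concat,
    List.concat_eq_append, List.map_append, List.sum_append,
    ← treeDist_eq hG f _ (pb_isPath hG i u)]
  simp

lemma edges_pb_subset {i j : V} (w : G.Walk i j) : (pb hG i j).edges ⊆ w.edges := by
  rw [← pb_eq hG w.bypass w.bypass_isPath]
  exact w.edges_bypass_subset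

lemma pb_single {u v : V} (h : G.Adj u v) : pb hG u v = Walk.cons h Walk.nil :=
  (pb_eq hG _ (by rw [Walk.cons_isPath_iff]; exact ⟨Walk.IsPath.nil, by simp [h.ne]⟩)).symm

lemma opp {u v : V} (h : G.Adj u v) (x : V) (h1 : v ∉ (pb hG x u).support)
    (h2 : u ∉ (pb hG x v).support) : False := by
  have hsub := edges_pb_subset hG ((pb hG x u).reverse.append (pb hG x v))
  have hm : s(u, v) ∈ (pb hG u v).edges := by
    rw [pb_single hG h]; simp
  have hmem := hsub hm
  rw [Walk.edges_append, Walk.edges_reverse, List.mem_append, List.mem_reverse] at hmem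
  rcases hmem with h' | h'
  · exact h1 ((pb hG x u).snd_mem_support_of_mem_edges h')
  · exact h2 ((pb hG x v).fst_mem_support_of_mem_edges h')

lemma sideStep {u v w x : V} (huv : G.Adj u v) (hwu : G.Adj w u) (hwv : w ≠ v)
    (hx : u ∉ (pb hG x w).support) : v ∉ (pb hG x u).support := by
  intro hv
  rw [pb_concat hG hwu hx, Walk.support_concat, List.mem_append] at hv
  rcases hv with hv | hv
  · -- v ∈ supp pb x w
    have e1 : pb hG v w = (pb hG x w).dropUntil v hv :=
      (pb_eq hG _ ((pb_isPath hG x w).dropUntil hv)).symm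
    have h1' : u ∉ (pb hG v w).support := by
      rw [e1]; intro hc; exact hx ((pb hG x w).support_dropUntil_subset hv hc)
    have h2' : w ∉ (pb hG v u).support := by
      rw [pb_single hG huv.symm]
      simp only [Walk.support_cons, Walk.support_nil, List.mem_cons, List.mem_singleton]
      rintro (rfl | rfl | h)
      · exact hwv rfl
      · exact hwu.ne rfl
      · simp at h
    exact opp hG hwu v h1' h2'
  · simp only [List.mem_singleton] at hv
    exact huv.ne hv.symm

lemma isPath_append {a b c : V} {p : G.Walk a b} {q : G.Walk b c} (hp : p.IsPath)
    (hq : q.IsPath) (h : ∀ x, x ∈ p.support → x ∈ q.support → x = b) :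
    (p.append q).IsPath := by
  rw [Walk.isPath_def, Walk.support_append, List.nodup_append]
  refine ⟨hp.support_nodup, ?_, ?_⟩
  · have hn := hq.support_nodup
    rw [q.support_eq_cons] at hn
    exact hn.of_cons
  · intro x hx y hx' hxy
    rw [← hxy] at hx'
    have hb := h x hx (List.mem_of_mem_tail hx')
    subst hb
    have hn := hq.support_nodup
    rw [q.support_eq_cons] at hn
    exact (List.nodup_cons.mp hn).1 hx'

end Aux

section Aux2

open SimpleGraph Walk

set_option linter.unusedSectionVars false

variable {V : Type*} [Fintype V] [DecidableEq V] {G : SimpleGraph V} (hG : G.IsTree)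

lemma pb_nil (u : V) : pb hG u u = Walk.nil := (pb_eq hG _ Walk.IsPath.nil).symm

lemma exists_leaf_behind : ∀ (n : ℕ) (u v : V), G.Adj u v →
    {x : V | v ∉ (pb hG x u).support}.ncard ≤ n →
    ∃ i, IsLeaf G i ∧ v ∉ (pb hG i u).support := by
  intro n
  induction n with
  | zero =>
    intro u v huv hcard
    exfalso
    have hu : u ∈ {x : V | v ∉ (pb hG x u).support} := by
      simp only [Set.mem_setOf_eq, pb_nil hG u, Walk.support_nil, List.mem_singleton]
      exact huv.ne'
    have := Set.ncard_pos (Set.toFinite _) |>.mpr ⟨u, hu⟩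
    omega
  | succ n ih =>
    intro u v huv hcard
    by_cases hu : IsLeaf G u
    · refine ⟨u, hu, ?_⟩
      simp only [pb_nil hG u, Walk.support_nil, List.mem_singleton]
      exact huv.ne'
    · have h3 : (G.neighborSet u).ncard = 3 ∨ True := Or.inr trivial
      -- u is not a leaf; since the graph is connected with ≥ 2 vertices,
      -- u has a neighbor; we need a neighbor different from v.
      -- We use that ncard (neighborSet u) ≠ 1 and v is a neighbor, so if every
      -- neighbor equals v then ncard = 1.
      have hvmem : v ∈ G.neighborSet u := huv
      have : ∃ w ∈ G.neighborSet u, w ≠ v := by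
        by_contra hc
        push_neg at hc
        have : G.neighborSet u = {v} := by
          apply Set.eq_singleton_iff_unique_mem.mpr
          exact ⟨hvmem, hc⟩
        exact hu (by rw [IsLeaf, this, Set.ncard_singleton])
      obtain ⟨w, hwmem, hwv⟩ := this
      have hwu : G.Adj w u := (G.mem_neighborSet u w |>.mp hwmem).symm
      -- strict inclusion of "behind" sets
      have hsub : {x : V | u ∉ (pb hG x w).support} ⊂ {x : V | v ∉ (pb hG x u).support} := by
        constructor
        · intro x hx
          exact sideStep hG huv hwu hwv hx
        · intro hsup
          have hu1 : u ∈ {x : V | v ∉ (pb hG x u).support} := by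
            simp only [Set.mem_setOf_eq, pb_nil hG u, Walk.support_nil, List.mem_singleton]
            exact huv.ne'
          have := hsup hu1
          simp only [Set.mem_setOf_eq] at this
          exact this (pb hG u w).start_mem_support
      have hlt := Set.ncard_lt_ncard hsub (Set.toFinite _)
      obtain ⟨i, hi, hbi⟩ := ih w u hwu (by omega)
      exact ⟨i, hi, sideStep hG huv hwu hwv hbi⟩

lemma leaf_unique_nbr {u v w : V} (hu : IsLeaf G u) (hv : G.Adj u v) (hw : G.Adj u w) :
    w = v := by
  obtain ⟨a, ha⟩ := Set.ncard_eq_one.mp hu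
  have h1 : v ∈ G.neighborSet u := hv
  have h2 : w ∈ G.neighborSet u := hw
  rw [ha, Set.mem_singleton_iff] at h1 h2
  rw [h1, h2]

lemma leaf_second {u i v : V} (hu : IsLeaf G u) (huv : G.Adj u v) (w : G.Walk u i)
    (hne : i ≠ u) : v ∈ w.support := by
  cases w with
  | nil => exact absurd rfl hne
  | cons h r =>
    have := leaf_unique_nbr hu huv h
    subst this
    rw [Walk.support_cons, List.mem_cons]
    exact Or.inr r.start_mem_support

lemma leaf_dist {u v i : V} (f : Sym2 V → ℝ) (hu : IsLeaf G u) (huv : G.Adj u v)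
    (hi : i ≠ u) : treeDist G hG f i u = treeDist G hG f i v + f s(u, v) := by
  have hv : v ∈ (pb hG i u).support := by
    have h := leaf_second hu huv (pb hG i u).reverse hi
    rwa [Walk.support_reverse, List.mem_reverse] at h
  rw [treeDist_split hG f hv, treeDist_single hG f huv.symm, Sym2.eq_swap]

end Aux2

section Aux3

open SimpleGraph Walk

set_option linter.unusedSectionVars false

variable {V : Type*} [Fintype V] [DecidableEq V] {G : SimpleGraph V} (hG : G.IsTree)

lemma pb_drop_avoid {i a x y : V} (hx : x ∈ (pb hG i a).support)
    (hy : y ∉ (pb hG i a).support) : y ∉ (pb hG x a).support := by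
  have e1 : pb hG x a = (pb hG i a).dropUntil x hx :=
    (pb_eq hG _ ((pb_isPath hG i a).dropUntil hx)).symm
  rw [e1]
  intro hc
  exact hy ((pb hG i a).support_dropUntil_subset hx hc)

lemma through {u a b i j : V} (hau : G.Adj a u) (hbu : G.Adj b u) (hab : a ≠ b)
    (hi : u ∉ (pb hG i a).support) (hj : u ∉ (pb hG j b).support) :
    u ∈ (pb hG i j).support := by
  have hpi : pb hG i u = (pb hG i a).concat hau := pb_concat hG hau hi
  have hpj : pb hG j u = (pb hG j b).concat hbu := pb_concat hG hbu hj
  have hdisj : ∀ x, x ∈ (pb hG i u).support → x ∈ (pb hG j u).support → x = u := by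
    intro x hxp hxq
    by_contra hxu
    have hxa : x ∈ (pb hG i a).support := by
      rw [hpi, Walk.support_concat, List.mem_append] at hxp
      rcases hxp with h | h
      · exact h
      · simp only [List.mem_singleton] at h; exact absurd h hxu
    have hxb : x ∈ (pb hG j b).support := by
      rw [hpj, Walk.support_concat, List.mem_append] at hxq
      rcases hxq with h | h
      · exact h
      · simp only [List.mem_singleton] at h; exact absurd h hxu
    have hua : u ∉ (pb hG x a).support := pb_drop_avoid hG hxa hi
    have hub : u ∉ (pb hG x b).support := pb_drop_avoid hG hxb hj
    -- the unique path from a to b is a — u — b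
    have hpab : (Walk.cons hau (Walk.cons hbu.symm Walk.nil)).IsPath := by
      rw [Walk.cons_isPath_iff, Walk.cons_isPath_iff]
      refine ⟨⟨Walk.IsPath.nil, by simp [hbu.ne']⟩, ?_⟩
      simp only [Walk.support_cons, Walk.support_nil, List.mem_cons, List.mem_singleton]
      push_neg
      exact ⟨hau.ne, hab, by simp⟩
    have hedge : s(a, u) ∈ (pb hG a b).edges := by
      rw [← pb_eq hG _ hpab]
      simp
    have hsub := edges_pb_subset hG ((pb hG x a).reverse.append (pb hG x b))
    have hmem := hsub hedge
    rw [Walk.edges_append, Walk.edges_reverse, List.mem_append, List.mem_reverse] at hmem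
    rcases hmem with h' | h'
    · exact hua ((pb hG x a).snd_mem_support_of_mem_edges h')
    · exact hub ((pb hG x b).snd_mem_support_of_mem_edges h')
  have hglue : ((pb hG i u).append (pb hG j u).reverse).IsPath := by
    refine isPath_append (pb_isPath hG i u) (pb_isPath hG j u).reverse ?_
    intro x hx hx'
    rw [Walk.support_reverse, List.mem_reverse] at hx'
    exact hdisj x hx hx'
  have := (pb_eq hG _ hglue).symm
  rw [this, Walk.mem_support_append_iff]
  exact Or.inl (pb hG i u).end_mem_support

lemma middle {u v i k : V} (huv : G.Adj u v)
    (hi : v ∉ (pb hG i u).support) (hk : u ∉ (pb hG k v).support) (f : Sym2 V → ℝ) :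
    treeDist G hG f i k = treeDist G hG f i u + f s(u, v) + treeDist G hG f k v := by
  have hq : (Walk.cons huv (pb hG k v).reverse).IsPath := by
    rw [Walk.cons_isPath_iff]
    refine ⟨(pb_isPath hG k v).reverse, ?_⟩
    rw [Walk.support_reverse, List.mem_reverse]
    exact hk
  have hdisj : ∀ x, x ∈ (pb hG i u).support →
      x ∈ (Walk.cons huv (pb hG k v).reverse).support → x = u := by
    intro x hx hx'
    rw [Walk.support_cons, List.mem_cons] at hx'
    rcases hx' with rfl | hx'
    · rfl
    rw [Walk.support_reverse, List.mem_reverse] at hx'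
    exfalso
    exact opp hG huv x (pb_drop_avoid hG hx hi) (pb_drop_avoid hG hx' hk)
  have hW : ((pb hG i u).append (Walk.cons huv (pb hG k v).reverse)).IsPath :=
    isPath_append (pb_isPath hG i u) hq hdisj
  rw [treeDist_eq hG f _ hW, Walk.edges_append, Walk.edges_cons, Walk.edges_reverse,
    List.map_append, List.sum_append, List.map_cons, List.sum_cons, List.map_reverse,
    List.sum_reverse, ← treeDist_eq hG f _ (pb_isPath hG i u),
    ← treeDist_eq hG f _ (pb_isPath hG k v)]
  ring

lemma ne_of_lastEdge {v a b i j : V} (hav : G.Adj a v) (hbv : G.Adj b v) (hab : a ≠ b)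
    (hi : v ∉ (pb hG i a).support) (hj : v ∉ (pb hG j b).support) : i ≠ j := by
  rintro rfl
  have h1 : pb hG i v = (pb hG i a).concat hav := pb_concat hG hav hi
  have h2 : pb hG i v = (pb hG i b).concat hbv := pb_concat hG hbv hj
  have heq : ((pb hG i a).concat hav).edges.getLast? =
      ((pb hG i b).concat hbv).edges.getLast? := by rw [← h1, ← h2]
  rw [Walk.edges_concat, Walk.edges_concat, List.concat_eq_append, List.concat_eq_append,
    List.getLast?_concat, List.getLast?_concat, Option.some_inj] at heq
  rcases Sym2.eq_iff.mp heq with ⟨h, -⟩ | ⟨h, -⟩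
  · exact hab h
  · exact hav.ne h

lemma ne_across {u v i k : V} (huv : G.Adj u v) (hi : v ∉ (pb hG i u).support)
    (hk : u ∉ (pb hG k v).support) : i ≠ k := by
  rintro rfl
  exact opp hG huv i hi hk

include hG in
lemma not_both_leaves {u v : V} (huv : G.Adj u v) (hu : IsLeaf G u) (hv : IsLeaf G v)
    (hleaves : 3 ≤ {x : V | IsLeaf G x}.ncard) : False := by
  have hall : ∀ x : V, x = u ∨ x = v := by
    intro x
    obtain ⟨p, hp⟩ : ∃ p : G.Walk u x, p.IsPath := ⟨pb hG u x, pb_isPath hG u x⟩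
    cases p with
    | nil => exact Or.inl rfl
    | cons h q =>
      have := leaf_unique_nbr hu huv h
      subst this
      rw [Walk.cons_isPath_iff] at hp
      cases q with
      | nil => exact Or.inr rfl
      | cons h' r =>
        have := leaf_unique_nbr hv huv.symm h'
        subst this
        exfalso
        exact hp.2 (by rw [Walk.support_cons]; exact List.mem_cons_of_mem _ r.start_mem_support)
  have hsub : {x : V | IsLeaf G x} ⊆ {u, v} := fun x _ => hall x
  have hle := Set.ncard_le_ncard hsub (Set.toFinite _)
  have : ({u, v} : Set V).ncard ≤ 2 := by
    apply le_trans (Set.ncard_insert_le u {v})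
    rw [Set.ncard_singleton]
  omega

end Aux3

section Aux4

open SimpleGraph Walk

set_option linter.unusedSectionVars false

variable {V : Type*} [Fintype V] [DecidableEq V] {G : SimpleGraph V} (hG : G.IsTree)

lemma two_nbrs {v u : V} (hv3 : (G.neighborSet v).ncard = 3) (humem : u ∈ G.neighborSet v) :
    ∃ a b, G.Adj a v ∧ G.Adj b v ∧ a ≠ u ∧ b ≠ u ∧ a ≠ b := by
  have h2 : 1 < (G.neighborSet v \ {u}).ncard := by
    have h := Set.ncard_diff_singleton_of_mem humem
    rw [hv3] at h
    omega
  obtain ⟨a, b, ha, hb, hab⟩ := (Set.one_lt_ncard_iff (Set.toFinite _)).mp h2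
  obtain ⟨ha1, ha2⟩ := ha
  obtain ⟨hb1, hb2⟩ := hb
  exact ⟨a, b, (G.mem_neighborSet v a |>.mp ha1).symm, (G.mem_neighborSet v b |>.mp hb1).symm,
    by simpa using ha2, by simpa using hb2, hab⟩

lemma mixed {u v : V} (huv : G.Adj u v) (hu : IsLeaf G u)
    (hv3 : (G.neighborSet v).ncard = 3) :
    ∃ i j, IsLeaf G i ∧ IsLeaf G j ∧ i ≠ j ∧ i ≠ u ∧ j ≠ u ∧
      ∀ f : Sym2 V → ℝ, 2 * f s(u, v) =
        treeDist G hG f i u + treeDist G hG f j u - treeDist G hG f i j := by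
  obtain ⟨a, b, hav, hbv, hau, hbu, hab⟩ := two_nbrs hv3 huv.symm
  obtain ⟨i, hi, hvi⟩ := exists_leaf_behind hG _ a v hav le_rfl
  obtain ⟨j, hj, hvj⟩ := exists_leaf_behind hG _ b v hbv le_rfl
  have hij : i ≠ j := ne_of_lastEdge hG hav hbv hab hvi hvj
  have hiu : i ≠ u := by
    rintro rfl
    exact hvi (by
      have := leaf_second hu huv (pb hG i a) (fun h => hau h)
      exact this)
  have hju : j ≠ u := by
    rintro rfl
    exact hvj (leaf_second hu huv (pb hG j b) (fun h => hbu h))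
  refine ⟨i, j, hi, hj, hij, hiu, hju, ?_⟩
  intro f
  have e1 := leaf_dist hG f hu huv hiu
  have e2 := leaf_dist hG f hu huv hju
  have e3 := treeDist_split hG f (through hG hav hbv hab hvi hvj)
  have e4 := treeDist_symm hG f v j
  linarith

lemma internal {u v : V} (huv : G.Adj u v) (hu3 : (G.neighborSet u).ncard = 3)
    (hv3 : (G.neighborSet v).ncard = 3) :
    ∃ i j k l, IsLeaf G i ∧ IsLeaf G j ∧ IsLeaf G k ∧ IsLeaf G l ∧
      i ≠ j ∧ k ≠ l ∧ i ≠ k ∧ j ≠ l ∧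
      ∀ f : Sym2 V → ℝ, 2 * f s(u, v) =
        treeDist G hG f i k + treeDist G hG f j l
          - treeDist G hG f i j - treeDist G hG f k l := by
  obtain ⟨a, b, hau, hbu, hav, hbv, hab⟩ := two_nbrs hu3 huv
  obtain ⟨c, d, hcv, hdv, hcu, hdu, hcd⟩ := two_nbrs hv3 huv.symm
  obtain ⟨i, hi, hui⟩ := exists_leaf_behind hG _ a u hau le_rfl
  obtain ⟨j, hj, huj⟩ := exists_leaf_behind hG _ b u hbu le_rfl
  obtain ⟨k, hk, hvk⟩ := exists_leaf_behind hG _ c v hcv le_rfl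
  obtain ⟨l, hl, hvl⟩ := exists_leaf_behind hG _ d v hdv le_rfl
  have hvi : v ∉ (pb hG i u).support := sideStep hG huv hau hav hui
  have hvj : v ∉ (pb hG j u).support := sideStep hG huv hbu hbv huj
  have huk : u ∉ (pb hG k v).support := sideStep hG huv.symm hcv hcu hvk
  have hul : u ∉ (pb hG l v).support := sideStep hG huv.symm hdv hdu hvl
  refine ⟨i, j, k, l, hi, hj, hk, hl,
    ne_of_lastEdge hG hau hbu hab hui huj,
    ne_of_lastEdge hG hcv hdv hcd hvk hvl,
    ne_across hG huv hvi huk,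
    ne_across hG huv hvj hul, ?_⟩
  intro f
  have e1 := middle hG huv hvi huk f
  have e2 := middle hG huv hvj hul f
  have e3 := treeDist_split hG f (through hG hau hbu hab hui huj)
  have e4 := treeDist_split hG f (through hG hcv hdv hcd hvk hvl)
  have s1 := treeDist_symm hG f u j
  have s2 := treeDist_symm hG f v l
  linarith

end Aux4

/-- For a fixed trivalent finite tree with at least three leaves, the `2`-dissimilarity
vector determines the edge weights: if two nonnegative weight functions induce the same
distances between all pairs of distinct leaves, then they agree on every edge. -/
theorem trivalent_tree_weights_determined_by_leaf_distances
    {V : Type*} [Fintype V] [DecidableEq V] (G : SimpleGraph V) (hG : G.IsTree)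
    (hleaves : 3 ≤ {v : V | IsLeaf G v}.ncard)
    (htrivalent : ∀ v : V, ¬ IsLeaf G v → (G.neighborSet v).ncard = 3)
    (ℓ ℓ' : Sym2 V → ℝ)
    (hℓ : ∀ e ∈ G.edgeSet, 0 ≤ ℓ e) (hℓ' : ∀ e ∈ G.edgeSet, 0 ≤ ℓ' e)
    (hdist : ∀ i j : V, IsLeaf G i → IsLeaf G j → i ≠ j →
      treeDist G hG ℓ i j = treeDist G hG ℓ' i j) :
    ∀ e ∈ G.edgeSet, ℓ e = ℓ' e := by
  intro e he
  induction e using Sym2.ind with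
  | _ u v =>
  have huv : G.Adj u v := he
  by_cases hu : IsLeaf G u <;> by_cases hv : IsLeaf G v
  · exact (not_both_leaves hG huv hu hv hleaves).elim
  · obtain ⟨i, j, hi, hj, hij, hiu, hju, hf⟩ := mixed hG huv hu (htrivalent v hv)
    have h1 := hf ℓ
    have h2 := hf ℓ'
    have d1 := hdist i u hi hu hiu
    have d2 := hdist j u hj hu hju
    have d3 := hdist i j hi hj hij
    linarith
  · obtain ⟨i, j, hi, hj, hij, hiv, hjv, hf⟩ := mixed hG huv.symm hv (htrivalent u hu)
    have h1 := hf ℓ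
    have h2 := hf ℓ'
    rw [Sym2.eq_swap] at h1 h2
    have d1 := hdist i v hi hv hiv
    have d2 := hdist j v hj hv hjv
    have d3 := hdist i j hi hj hij
    linarith
  · obtain ⟨i, j, k, l, hi, hj, hk, hl, hij, hkl, hik, hjl, hf⟩ :=
      internal hG huv (htrivalent u hu) (htrivalent v hv)
    have h1 := hf ℓ
    have h2 := hf ℓ'
    have d1 := hdist i k hi hk hik
    have d2 := hdist j l hj hl hjl
    have d3 := hdist i j hi hj hij
    have d4 := hdist k l hk hl hkl
    linarith
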